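/- The softmax update uniquely maximizes the error-exponent Lagrangian: let q be a positive probability vector on Fin M, let a : Fin M → ℝ satisfy a i > 0 for all i, and let λ ≥ 0. Define c i = Real.exp ((λ * Real.log (a i) + Real.log (q i)) / (λ + 1)) and p' i = c i / (∑ k, c k). Then for every probability vector p on Fin M (with terms where p i = 0 contributing 0 to all sums), −D(p‖q) + λ * ∑ i, p i * Real.log (a i / p i) ≤ −D(p'‖q) + λ * ∑ i, p' i * Real.log (a i / p' i), with equality if and only if p = p'. -/
import Mathlib

lemma gibbs_aux (M : ℕ) (p p' : Fin M → ℝ) (hp : ∀ i, 0 ≤ p i) (hp1 : ∑ i, p i = 1)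
    (hp'pos : ∀ i, 0 < p' i) (hp'1 : ∑ i, p' i = 1) :
    0 ≤ ∑ i, p i * Real.log (p i / p' i) ∧
      ((∑ i, p i * Real.log (p i / p' i)) = 0 ↔ p = p') := by
  set g : Fin M → ℝ := fun i => p i * Real.log (p i / p' i) - (p i - p' i) with hg
  have hgsum : ∑ i, g i = ∑ i, p i * Real.log (p i / p' i) := by
    simp [hg, Finset.sum_sub_distrib, hp1, hp'1]
  have hgnonneg : ∀ i ∈ Finset.univ, 0 ≤ g i := by
    intro i _
    rcases (hp i).eq_or_lt with h | h
    · simp [hg, ← h, (hp'pos i).le]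
    · have h1 : Real.log (p' i / p i) ≤ p' i / p i - 1 :=
        Real.log_le_sub_one_of_pos (div_pos (hp'pos i) h)
      have h2 : Real.log (p i / p' i) = - Real.log (p' i / p i) := by
        rw [← Real.log_inv]; congr 1; field_simp
      have h3 : p i * (p' i / p i) = p' i := by field_simp
      simp only [hg]
      nlinarith [mul_le_mul_of_nonneg_left h1 (hp i)]
  have hgzero : ∀ i, g i = 0 → p i = p' i := by
    intro i hgi
    rcases (hp i).eq_or_lt with h | h
    · exfalso; simp [hg, ← h] at hgi; linarith [hp'pos i, hgi]
    · by_contra hne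
      have hne' : p' i / p i ≠ 1 := by
        intro h1
        apply hne
        field_simp at h1
        linarith
      have h1 : Real.log (p' i / p i) < p' i / p i - 1 :=
        Real.log_lt_sub_one_of_pos (div_pos (hp'pos i) h) hne'
      have h2 : Real.log (p i / p' i) = - Real.log (p' i / p i) := by
        rw [← Real.log_inv]; congr 1; field_simp
      have h3 : p i * (p' i / p i) = p' i := by field_simp
      simp only [hg] at hgi
      nlinarith [mul_lt_mul_of_pos_left h1 h]
  have hsumnn : 0 ≤ ∑ i, g i := Finset.sum_nonneg hgnonneg
  constructor
  · linarith [hgsum ▸ hsumnn]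
  · constructor
    · intro h0
      have : ∑ i, g i = 0 := by rw [hgsum, h0]
      have := (Finset.sum_eq_zero_iff_of_nonneg hgnonneg).mp this
      funext i
      exact hgzero i (this i (Finset.mem_univ i))
    · intro h
      subst h
      apply Finset.sum_eq_zero
      intro i _
      rw [div_self (hp'pos i).ne', Real.log_one, mul_zero]

/-- The softmax update uniquely maximizes the error-exponent Lagrangian: with
`c i = exp((λ log (a i) + log (q i)) / (λ+1))` and `p' i = c i / ∑ k, c k`, for every
probability vector `p` the Lagrangian value at `p` is at most its value at `p'`, with
equality if and only if `p = p'`. -/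
theorem softmax_unique_maximizer_error_exponent (M : ℕ) (hM : 1 ≤ M)
    (q : Fin M → ℝ) (hq : ∀ i, 0 < q i) (hq1 : ∑ i, q i = 1)
    (a : Fin M → ℝ) (ha : ∀ i, 0 < a i)
    (lam : ℝ) (hlam : 0 ≤ lam)
    (c p' : Fin M → ℝ)
    (hc : ∀ i, c i = Real.exp ((lam * Real.log (a i) + Real.log (q i)) / (lam + 1)))
    (hp' : ∀ i, p' i = c i / ∑ k, c k) :
    ∀ p : Fin M → ℝ, (∀ i, 0 ≤ p i) → (∑ i, p i = 1) →
      (-(∑ i, p i * Real.log (p i / q i)) + lam * ∑ i, p i * Real.log (a i / p i) ≤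
        -(∑ i, p' i * Real.log (p' i / q i)) + lam * ∑ i, p' i * Real.log (a i / p' i)) ∧
      (-(∑ i, p i * Real.log (p i / q i)) + lam * ∑ i, p i * Real.log (a i / p i) =
        -(∑ i, p' i * Real.log (p' i / q i)) + lam * ∑ i, p' i * Real.log (a i / p' i) ↔
        p = p') := by
  have hne : Nonempty (Fin M) := Fin.pos_iff_nonempty.mp (by omega)
  have hcpos : ∀ i, 0 < c i := fun i => (hc i) ▸ Real.exp_pos _
  set Z : ℝ := ∑ k, c k with hZ
  have hZpos : 0 < Z := Finset.sum_pos (fun i _ => hcpos i) Finset.univ_nonempty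
  have hp'pos : ∀ i, 0 < p' i := fun i => (hp' i) ▸ div_pos (hcpos i) hZpos
  have hp'1 : ∑ i, p' i = 1 := by
    simp only [hp']
    rw [← Finset.sum_div, ← hZ, div_self hZpos.ne']
  have hlam1 : (0:ℝ) < lam + 1 := by linarith
  -- key rewriting of the Lagrangian
  have key : ∀ p : Fin M → ℝ, (∀ i, 0 ≤ p i) → (∑ i, p i = 1) →
      (-(∑ i, p i * Real.log (p i / q i)) + lam * ∑ i, p i * Real.log (a i / p i)) =
        (lam + 1) * (Real.log Z - ∑ i, p i * Real.log (p i / p' i)) := by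
    intro p hp hp1
    have term : ∀ i, -(p i * Real.log (p i / q i)) + lam * (p i * Real.log (a i / p i)) =
        (lam + 1) * (p i * Real.log Z - p i * Real.log (p i / p' i)) := by
      intro i
      rcases (hp i).eq_or_lt with h | h
      · simp [← h]
      · have hlogc : Real.log (c i) = (lam * Real.log (a i) + Real.log (q i)) / (lam + 1) := by
          rw [hc i, Real.log_exp]
        have hlogp' : Real.log (p' i) = Real.log (c i) - Real.log Z := by
          rw [hp' i, Real.log_div (hcpos i).ne' hZpos.ne']
        rw [Real.log_div h.ne' (hq i).ne', Real.log_div (ha i).ne' h.ne',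
            Real.log_div h.ne' (hp'pos i).ne', hlogp', hlogc]
        field_simp
        ring
    calc -(∑ i, p i * Real.log (p i / q i)) + lam * ∑ i, p i * Real.log (a i / p i)
        = ∑ i, (-(p i * Real.log (p i / q i)) + lam * (p i * Real.log (a i / p i))) := by
          rw [Finset.sum_add_distrib, Finset.sum_neg_distrib, ← Finset.mul_sum]
      _ = ∑ i, (lam + 1) * (p i * Real.log Z - p i * Real.log (p i / p' i)) := by
          exact Finset.sum_congr rfl (fun i _ => term i)
      _ = (lam + 1) * (Real.log Z - ∑ i, p i * Real.log (p i / p' i)) := by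
          rw [← Finset.mul_sum, Finset.sum_sub_distrib, ← Finset.sum_mul, hp1, one_mul]
  intro p hp hp1
  obtain ⟨hD, hDeq⟩ := gibbs_aux M p p' hp hp1 hp'pos hp'1
  have hD' : ∑ i, p' i * Real.log (p' i / p' i) = 0 := by
    apply Finset.sum_eq_zero
    intro i _
    rw [div_self (hp'pos i).ne', Real.log_one, mul_zero]
  rw [key p hp hp1, key p' (fun i => (hp'pos i).le) hp'1, hD']
  constructor
  · apply mul_le_mul_of_nonneg_left _ hlam1.le
    linarith
  · constructor
    · intro h
      have := mul_left_cancel₀ hlam1.ne' h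
      exact hDeq.mp (by linarith)
    · intro h
      subst h
      rw [hDeq.mpr rfl] at hD' ⊢
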